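/- Let A be a category admitting equalisers, λ : FG → GF an entwining from a monad F = (F, m, e) to a comonad G = (G, δ, ε) on A, g : Id → G a grouplike morphism, Ĝ the lifting of G to a comonad on A_F, and K_g : A → (A_F)^{Ĝ} the functor a ↦ ((F(a), m_a), g̃_a) induced by the grouplike morphism, where g̃ = λ ∘ Fg. Then K_g is full and faithful if and only if the monad F^g (the equaliser of gF and λ ∘ Fg) is isomorphic to the identity monad on A; equivalently, for every object a of A the diagram a →^{e_a} F(a) ⇉ GF(a), with parallel pair g_{F(a)} and λ_a ∘ F(g_a), is an equaliser diagram. -/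

import Mathlib

open CategoryTheory CategoryTheory.Limits

namespace Paper


variable {A : Type*} [Category A]

/-- An entwining (mixed distributive law) `λ : TG ⟶ GT` from a monad `T` to a comonad `G`. -/
structure Entwining (T : Monad A) (G : Comonad A) where
  lam : (G : A ⥤ A) ⋙ (T : A ⥤ A) ⟶ (T : A ⥤ A) ⋙ (G : A ⥤ A)
  comp_mul : ∀ a : A, T.μ.app ((G : A ⥤ A).obj a) ≫ lam.app a =
      (T : A ⥤ A).map (lam.app a) ≫ lam.app ((T : A ⥤ A).obj a) ≫
        (G : A ⥤ A).map (T.μ.app a)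
  comp_unit : ∀ a : A, T.η.app ((G : A ⥤ A).obj a) ≫ lam.app a = (G : A ⥤ A).map (T.η.app a)
  delta_comp : ∀ a : A, lam.app a ≫ G.δ.app ((T : A ⥤ A).obj a) =
      (T : A ⥤ A).map (G.δ.app a) ≫ lam.app ((G : A ⥤ A).obj a) ≫
        (G : A ⥤ A).map (lam.app a)
  eps_comp : ∀ a : A, lam.app a ≫ G.ε.app ((T : A ⥤ A).obj a) = (T : A ⥤ A).map (G.ε.app a)

namespace Entwining

variable {T : Monad A} {G : Comonad A} (E : Entwining T G)

lemma lam_natural {a b : A} (f : a ⟶ b) :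
    (T : A ⥤ A).map ((G : A ⥤ A).map f) ≫ E.lam.app b =
      E.lam.app a ≫ (G : A ⥤ A).map ((T : A ⥤ A).map f) :=
  E.lam.naturality f

/-- The value of the lifted comonad `Ĝ` on an object of `A_T`:
`Ĝ(a, h) = (G(a), G(h) ∘ λ_a)`. -/
@[simps]
def liftAlgebra (X : T.Algebra) : T.Algebra where
  A := (G : A ⥤ A).obj X.A
  a := E.lam.app X.A ≫ (G : A ⥤ A).map X.a
  unit := by
    rw [← Category.assoc, E.comp_unit, ← Functor.map_comp, X.unit]
    simp
  assoc := by
    calc T.μ.app ((G : A ⥤ A).obj X.A) ≫ E.lam.app X.A ≫ (G : A ⥤ A).map X.a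
        = (T.μ.app ((G : A ⥤ A).obj X.A) ≫ E.lam.app X.A) ≫ (G : A ⥤ A).map X.a := by
          rw [Category.assoc]
      _ = (T : A ⥤ A).map (E.lam.app X.A) ≫ E.lam.app ((T : A ⥤ A).obj X.A) ≫
            (G : A ⥤ A).map (T.μ.app X.A) ≫ (G : A ⥤ A).map X.a := by
          rw [E.comp_mul]; simp [Category.assoc]
      _ = (T : A ⥤ A).map (E.lam.app X.A) ≫ E.lam.app ((T : A ⥤ A).obj X.A) ≫
            (G : A ⥤ A).map ((T : A ⥤ A).map X.a) ≫ (G : A ⥤ A).map X.a := by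
          rw [← Functor.map_comp, X.assoc, Functor.map_comp]
      _ = (T : A ⥤ A).map (E.lam.app X.A) ≫ (T : A ⥤ A).map ((G : A ⥤ A).map X.a) ≫
            E.lam.app X.A ≫ (G : A ⥤ A).map X.a := by
          rw [← Category.assoc (E.lam.app ((T : A ⥤ A).obj X.A)), ← E.lam_natural X.a]
          simp [Category.assoc]
      _ = (T : A ⥤ A).map (E.lam.app X.A ≫ (G : A ⥤ A).map X.a) ≫
            E.lam.app X.A ≫ (G : A ⥤ A).map X.a := by
          rw [Functor.map_comp, Category.assoc]

/-- The lifting `Ĝ` of the comonad `G` to the Eilenberg–Moore category `A_T`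
along the entwining `λ`. -/
@[simps]
def liftedComonad : Comonad (T.Algebra) where
  obj X := E.liftAlgebra X
  map {X Y} f :=
    { f := (G : A ⥤ A).map f.f
      h := by
        dsimp only [liftAlgebra]
        calc (T : A ⥤ A).map ((G : A ⥤ A).map f.f) ≫ E.lam.app Y.A ≫ (G : A ⥤ A).map Y.a
            = (E.lam.app X.A ≫ (G : A ⥤ A).map ((T : A ⥤ A).map f.f)) ≫
                (G : A ⥤ A).map Y.a := by
              rw [← Category.assoc, E.lam_natural f.f]
          _ = E.lam.app X.A ≫ (G : A ⥤ A).map ((T : A ⥤ A).map f.f ≫ Y.a) := by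
              rw [Category.assoc, ← Functor.map_comp]
          _ = E.lam.app X.A ≫ (G : A ⥤ A).map (X.a ≫ f.f) := by rw [f.h]
          _ = (E.lam.app X.A ≫ (G : A ⥤ A).map X.a) ≫ (G : A ⥤ A).map f.f := by
              rw [Functor.map_comp, Category.assoc] }
  map_id X := by ext; exact (G : A ⥤ A).map_id X.A
  map_comp f g := by ext; exact (G : A ⥤ A).map_comp f.f g.f
  ε :=
    { app := fun X =>
        { f := G.ε.app X.A
          h := by
            dsimp only [liftAlgebra, Functor.id_obj]
            have hnat : (G : A ⥤ A).map X.a ≫ G.ε.app X.A =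
                G.ε.app ((T : A ⥤ A).obj X.A) ≫ X.a := by
              simpa using (G.ε.naturality X.a).symm
            rw [Category.assoc, hnat, ← Category.assoc, E.eps_comp] }
      naturality := fun X Y f => by ext; exact G.ε.naturality f.f }
  δ :=
    { app := fun X =>
        { f := G.δ.app X.A
          h := by
            dsimp
            calc (T : A ⥤ A).map (G.δ.app X.A) ≫ E.lam.app ((G : A ⥤ A).obj X.A) ≫
                  (G : A ⥤ A).map (E.lam.app X.A ≫ (G : A ⥤ A).map X.a)
                = (T : A ⥤ A).map (G.δ.app X.A) ≫ E.lam.app ((G : A ⥤ A).obj X.A) ≫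
                    (G : A ⥤ A).map (E.lam.app X.A) ≫
                    (G : A ⥤ A).map ((G : A ⥤ A).map X.a) := by
                  rw [Functor.map_comp]
              _ = (E.lam.app X.A ≫ G.δ.app ((T : A ⥤ A).obj X.A)) ≫
                    (G : A ⥤ A).map ((G : A ⥤ A).map X.a) := by
                  rw [E.delta_comp]; simp [Category.assoc]
              _ = E.lam.app X.A ≫ (G : A ⥤ A).map X.a ≫ G.δ.app X.A := by
                  have hnat : (G : A ⥤ A).map X.a ≫ G.δ.app X.A =
                      G.δ.app ((T : A ⥤ A).obj X.A) ≫
                        (G : A ⥤ A).map ((G : A ⥤ A).map X.a) := by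
                    simpa using (G.δ.naturality X.a).symm
                  rw [hnat, Category.assoc]
              _ = (E.lam.app X.A ≫ (G : A ⥤ A).map X.a) ≫ G.δ.app X.A := by
                  rw [Category.assoc] }
      naturality := fun X Y f => by ext; exact G.δ.naturality f.f }
  coassoc X := by ext; exact G.coassoc X.A
  left_counit X := by ext; exact G.left_counit X.A
  right_counit X := by ext; exact G.right_counit X.A


/-- The value of the lifted monad `T̂` on an object of `A^G`: `T̂(a, θ) = (T(a), λ_a ∘ T(θ))`. -/
@[simps]
def liftCoalgebra (X : G.Coalgebra) : G.Coalgebra where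
  A := (T : A ⥤ A).obj X.A
  a := (T : A ⥤ A).map X.a ≫ E.lam.app X.A
  counit := by
    rw [Category.assoc, E.eps_comp, ← Functor.map_comp, X.counit]
    simp
  coassoc := by
    calc ((T : A ⥤ A).map X.a ≫ E.lam.app X.A) ≫ G.δ.app ((T : A ⥤ A).obj X.A)
        = (T : A ⥤ A).map X.a ≫ (T : A ⥤ A).map (G.δ.app X.A) ≫
            E.lam.app ((G : A ⥤ A).obj X.A) ≫ (G : A ⥤ A).map (E.lam.app X.A) := by
          rw [Category.assoc, E.delta_comp]
      _ = (T : A ⥤ A).map (X.a ≫ G.δ.app X.A) ≫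
            E.lam.app ((G : A ⥤ A).obj X.A) ≫ (G : A ⥤ A).map (E.lam.app X.A) := by
          rw [Functor.map_comp, Category.assoc]
      _ = (T : A ⥤ A).map X.a ≫ (T : A ⥤ A).map ((G : A ⥤ A).map X.a) ≫
            E.lam.app ((G : A ⥤ A).obj X.A) ≫ (G : A ⥤ A).map (E.lam.app X.A) := by
          rw [X.coassoc, Functor.map_comp, Category.assoc]
      _ = (T : A ⥤ A).map X.a ≫ E.lam.app X.A ≫
            (G : A ⥤ A).map ((T : A ⥤ A).map X.a) ≫ (G : A ⥤ A).map (E.lam.app X.A) := by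
          rw [← Category.assoc ((T : A ⥤ A).map ((G : A ⥤ A).map X.a)), E.lam_natural X.a]
          simp only [Category.assoc]
      _ = ((T : A ⥤ A).map X.a ≫ E.lam.app X.A) ≫
            (G : A ⥤ A).map ((T : A ⥤ A).map X.a ≫ E.lam.app X.A) := by
          rw [Functor.map_comp]
          simp only [Category.assoc]


/-- The lifting of the endofunctor `T` to `A^G`. -/
@[simps]
def liftFunctorT : G.Coalgebra ⥤ G.Coalgebra where
  obj X := E.liftCoalgebra X
  map {X Y} f :=
    { f := (T : A ⥤ A).map f.f
      h := by
        dsimp only [liftCoalgebra]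
        calc ((T : A ⥤ A).map X.a ≫ E.lam.app X.A) ≫ (G : A ⥤ A).map ((T : A ⥤ A).map f.f)
            = (T : A ⥤ A).map X.a ≫ E.lam.app X.A ≫
                (G : A ⥤ A).map ((T : A ⥤ A).map f.f) := by rw [Category.assoc]
          _ = (T : A ⥤ A).map X.a ≫ (T : A ⥤ A).map ((G : A ⥤ A).map f.f) ≫
                E.lam.app Y.A := by rw [← E.lam_natural f.f]
          _ = (T : A ⥤ A).map (X.a ≫ (G : A ⥤ A).map f.f) ≫ E.lam.app Y.A := by
              rw [Functor.map_comp, Category.assoc]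
          _ = (T : A ⥤ A).map (f.f ≫ Y.a) ≫ E.lam.app Y.A := by rw [f.h]
          _ = (T : A ⥤ A).map f.f ≫ (T : A ⥤ A).map Y.a ≫ E.lam.app Y.A := by
              rw [Functor.map_comp, Category.assoc] }
  map_id X := by ext; exact (T : A ⥤ A).map_id X.A
  map_comp f g := by ext; exact (T : A ⥤ A).map_comp f.f g.f

/-- The unit of the lifted monad. -/
@[simps]
def liftEta : 𝟭 (G.Coalgebra) ⟶ E.liftFunctorT where
  app X :=
    { f := T.η.app X.A
      h := by
        dsimp [liftFunctorT, liftCoalgebra]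
        have hnat : X.a ≫ T.η.app ((G : A ⥤ A).obj X.A) =
            T.η.app X.A ≫ (T : A ⥤ A).map X.a := by
          simpa using T.η.naturality X.a
        rw [← Category.assoc, ← hnat, Category.assoc, E.comp_unit] }
  naturality X Y f := by
    ext
    show f.f ≫ T.η.app Y.A = T.η.app X.A ≫ (T : A ⥤ A).map f.f
    simpa using T.η.naturality f.f

/-- The multiplication of the lifted monad. -/
@[simps]
def liftMu : E.liftFunctorT ⋙ E.liftFunctorT ⟶ E.liftFunctorT where
  app X :=
    { f := T.μ.app X.A
      h := by
        dsimp
        have hnat : (T : A ⥤ A).map ((T : A ⥤ A).map X.a) ≫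
              T.μ.app ((G : A ⥤ A).obj X.A) = T.μ.app X.A ≫ (T : A ⥤ A).map X.a := by
          simpa using T.μ.naturality X.a
        calc ((T : A ⥤ A).map ((T : A ⥤ A).map X.a ≫ E.lam.app X.A) ≫
                E.lam.app ((T : A ⥤ A).obj X.A)) ≫ (G : A ⥤ A).map (T.μ.app X.A)
            = (T : A ⥤ A).map ((T : A ⥤ A).map X.a) ≫
                ((T : A ⥤ A).map (E.lam.app X.A) ≫ E.lam.app ((T : A ⥤ A).obj X.A) ≫
                  (G : A ⥤ A).map (T.μ.app X.A)) := by
              rw [Functor.map_comp]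
              simp only [Category.assoc]
          _ = (T : A ⥤ A).map ((T : A ⥤ A).map X.a) ≫
                T.μ.app ((G : A ⥤ A).obj X.A) ≫ E.lam.app X.A := by
              rw [← E.comp_mul]
          _ = (T.μ.app X.A ≫ (T : A ⥤ A).map X.a) ≫ E.lam.app X.A := by
              rw [← Category.assoc, hnat]
          _ = T.μ.app X.A ≫ (T : A ⥤ A).map X.a ≫ E.lam.app X.A := by
              rw [Category.assoc] }
  naturality X Y f := by
    ext
    show (T : A ⥤ A).map ((T : A ⥤ A).map f.f) ≫ T.μ.app Y.A =
      T.μ.app X.A ≫ (T : A ⥤ A).map f.f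
    simpa using T.μ.naturality f.f

/-- The lifting `T̂` of the monad `T` to the Eilenberg–Moore category `A^G`
along the entwining `λ`. -/
def liftedMonad : Monad (G.Coalgebra) where
  toFunctor := E.liftFunctorT
  η := E.liftEta
  μ := E.liftMu
  assoc X := by ext; exact T.assoc X.A
  left_unit X := by ext; exact T.left_unit X.A
  right_unit X := by ext; exact T.right_unit X.A


end Entwining

/-- A grouplike morphism `g : Id ⟶ G` for a comonad `G`. -/
structure Grouplike {A : Type*} [Category A] (G : Comonad A) where
  g : 𝟭 A ⟶ (G : A ⥤ A)
  counit : ∀ a : A, g.app a ≫ G.ε.app a = 𝟙 a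
  comul : ∀ a : A, g.app a ≫ G.δ.app a = g.app a ≫ (G : A ⥤ A).map (g.app a)


namespace Entwining

variable {A : Type*} [Category A] {F : Monad A} {G : Comonad A}
variable (E : Entwining F G) (gl : Grouplike G)

/-- The natural transformation `gF : F ⟶ GF`. -/
def gF : (F : A ⥤ A) ⟶ (F : A ⥤ A) ⋙ (G : A ⥤ A) :=
  Functor.whiskerLeft (F : A ⥤ A) gl.g

/-- The natural transformation `g̃ = λ ∘ Fg : F ⟶ GF`. -/
def tildeg : (F : A ⥤ A) ⟶ (F : A ⥤ A) ⋙ (G : A ⥤ A) :=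
  Functor.whiskerRight gl.g (F : A ⥤ A) ≫ E.lam

@[simp] lemma gF_app (a : A) : (gF (F := F) gl).app a = gl.g.app ((F : A ⥤ A).obj a) := rfl

@[simp] lemma tildeg_app (a : A) :
    (E.tildeg gl).app a = (F : A ⥤ A).map (gl.g.app a) ≫ E.lam.app a := rfl

lemma eta_equalizes_app (a : A) :
    F.η.app a ≫ (gF (F := F) gl).app a = F.η.app a ≫ (E.tildeg gl).app a := by
  have h1 := gl.g.naturality (F.η.app a)
  have h2 := F.η.naturality (gl.g.app a)
  simp only [Functor.id_map, Functor.id_obj, Functor.comp_map] at h1 h2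
  simp only [gF_app, tildeg_app]
  rw [← Category.assoc, ← h2, Category.assoc, E.comp_unit, ← h1]

lemma eta_equalizes : F.η ≫ gF (F := F) gl = F.η ≫ E.tildeg gl := by
  ext a
  exact eta_equalizes_app E gl a

variable [HasEqualizers A]

/-- The equaliser functor `F^g` of the pair `gF`, `λ ∘ Fg`. -/
noncomputable def Fg : A ⥤ A := equalizer (gF (F := F) gl) (E.tildeg gl)

/-- The equaliser inclusion `i_F : F^g ⟶ F`. -/
noncomputable def iF : E.Fg gl ⟶ (F : A ⥤ A) := equalizer.ι _ _

/-- The horizontal composite `i_F i_F : F^g F^g ⟶ FF`. -/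
noncomputable def iFiF : E.Fg gl ⋙ E.Fg gl ⟶ (F : A ⥤ A) ⋙ (F : A ⥤ A) :=
  Functor.whiskerLeft (E.Fg gl) (E.iF gl) ≫ Functor.whiskerRight (E.iF gl) (F : A ⥤ A)

/-- The canonical natural transformation `e' : Id ⟶ F^g` with `i_F ∘ e' = e`. -/
noncomputable def unitFg : 𝟭 A ⟶ E.Fg gl :=
  equalizer.lift F.η (eta_equalizes E gl)

end Entwining


namespace Entwining

variable {A : Type*} [Category A] {F : Monad A} {G : Comonad A}
variable (E : Entwining F G) (gl : Grouplike G)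

/-- `g̃_a` as a morphism of `F`-modules `(F(a), m_a) ⟶ Ĝ(F(a), m_a)`. -/
@[simps]
def tildegAlg (a : A) : F.free.obj a ⟶ E.liftedComonad.obj (F.free.obj a) where
  f := (F : A ⥤ A).map (gl.g.app a) ≫ E.lam.app a
  h := by
    show (F : A ⥤ A).map ((F : A ⥤ A).map (gl.g.app a) ≫ E.lam.app a) ≫
        E.lam.app ((F : A ⥤ A).obj a) ≫ (G : A ⥤ A).map (F.μ.app a) =
      F.μ.app a ≫ (F : A ⥤ A).map (gl.g.app a) ≫ E.lam.app a
    have hnat : (F : A ⥤ A).map ((F : A ⥤ A).map (gl.g.app a)) ≫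
        F.μ.app ((G : A ⥤ A).obj a) = F.μ.app a ≫ (F : A ⥤ A).map (gl.g.app a) := by
      simpa using F.μ.naturality (gl.g.app a)
    calc (F : A ⥤ A).map ((F : A ⥤ A).map (gl.g.app a) ≫ E.lam.app a) ≫
          E.lam.app ((F : A ⥤ A).obj a) ≫ (G : A ⥤ A).map (F.μ.app a)
        = (F : A ⥤ A).map ((F : A ⥤ A).map (gl.g.app a)) ≫
            ((F : A ⥤ A).map (E.lam.app a) ≫ E.lam.app ((F : A ⥤ A).obj a) ≫
              (G : A ⥤ A).map (F.μ.app a)) := by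
          rw [Functor.map_comp]
          simp only [Category.assoc]
      _ = (F : A ⥤ A).map ((F : A ⥤ A).map (gl.g.app a)) ≫
            F.μ.app ((G : A ⥤ A).obj a) ≫ E.lam.app a := by rw [← E.comp_mul]
      _ = (F.μ.app a ≫ (F : A ⥤ A).map (gl.g.app a)) ≫ E.lam.app a := by
          rw [← Category.assoc, hnat]
      _ = F.μ.app a ≫ (F : A ⥤ A).map (gl.g.app a) ≫ E.lam.app a := by
          rw [Category.assoc]

/-- The comparison functor `K_g : A ⥤ (A_F)^{Ĝ}`, `a ↦ ((F(a), m_a), g̃_a)`, induced by a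
grouplike morphism `g`. -/
@[simps]
def Kg : A ⥤ E.liftedComonad.Coalgebra where
  obj a :=
    { A := F.free.obj a
      a := E.tildegAlg gl a
      counit := by
        ext
        show ((F : A ⥤ A).map (gl.g.app a) ≫ E.lam.app a) ≫ G.ε.app ((F : A ⥤ A).obj a) =
          𝟙 ((F : A ⥤ A).obj a)
        rw [Category.assoc, E.eps_comp, ← Functor.map_comp, gl.counit]
        simp
      coassoc := by
        ext
        dsimp
        calc ((F : A ⥤ A).map (gl.g.app a) ≫ E.lam.app a) ≫ G.δ.app ((F : A ⥤ A).obj a)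
            = (F : A ⥤ A).map (gl.g.app a) ≫ (F : A ⥤ A).map (G.δ.app a) ≫
                E.lam.app ((G : A ⥤ A).obj a) ≫ (G : A ⥤ A).map (E.lam.app a) := by
              rw [Category.assoc, E.delta_comp]
          _ = (F : A ⥤ A).map (gl.g.app a ≫ G.δ.app a) ≫
                E.lam.app ((G : A ⥤ A).obj a) ≫ (G : A ⥤ A).map (E.lam.app a) := by
              rw [Functor.map_comp, Category.assoc]
          _ = (F : A ⥤ A).map (gl.g.app a) ≫ (F : A ⥤ A).map ((G : A ⥤ A).map (gl.g.app a)) ≫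
                E.lam.app ((G : A ⥤ A).obj a) ≫ (G : A ⥤ A).map (E.lam.app a) := by
              rw [gl.comul, Functor.map_comp, Category.assoc]
          _ = (F : A ⥤ A).map (gl.g.app a) ≫ E.lam.app a ≫
                (G : A ⥤ A).map ((F : A ⥤ A).map (gl.g.app a)) ≫
                (G : A ⥤ A).map (E.lam.app a) := by
              have hre := reassoc_of% (E.lam_natural (gl.g.app a))
              rw [hre]
          _ = ((F : A ⥤ A).map (gl.g.app a) ≫ E.lam.app a) ≫
                (G : A ⥤ A).map ((F : A ⥤ A).map (gl.g.app a) ≫ E.lam.app a) := by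
              rw [Functor.map_comp]
              simp only [Category.assoc] }
  map {a b} f :=
    { f := F.free.map f
      h := by
        ext
        dsimp
        have h1 : (F : A ⥤ A).map f ≫ (F : A ⥤ A).map (gl.g.app b) ≫ E.lam.app b =
            ((F : A ⥤ A).map (gl.g.app a) ≫ E.lam.app a) ≫
              (G : A ⥤ A).map ((F : A ⥤ A).map f) := by
          have := (E.tildeg gl).naturality f
          simpa using this
        exact h1.symm }
  map_id a := by ext; dsimp; simp
  map_comp f g := by ext; dsimp; simp

end Entwining

namespace Entwining

variable {A : Type*} [Category A] {F : Monad A} {G : Comonad A}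
variable (E : Entwining F G) (gl : Grouplike G)

/-- The component form of the coalgebra-morphism condition for a morphism `Kg a ⟶ Kg b`. -/
lemma coalg_h_f {a b : A} (t : (E.Kg gl).obj a ⟶ (E.Kg gl).obj b) :
    ((F : A ⥤ A).map (gl.g.app a) ≫ E.lam.app a) ≫ (G : A ⥤ A).map t.f.f =
      t.f.f ≫ ((F : A ⥤ A).map (gl.g.app b) ≫ E.lam.app b) := by
  have h := congrArg Monad.Algebra.Hom.f t.h
  exact h

/-- Every morphism of algebras out of a free algebra is determined by its restriction
along the unit. -/
lemma alg_f_eq {a b : A} (t : (E.Kg gl).obj a ⟶ (E.Kg gl).obj b) :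
    t.f.f = (F : A ⥤ A).map (F.η.app a ≫ t.f.f) ≫ F.μ.app b := by
  have h : (F : A ⥤ A).map t.f.f ≫ F.μ.app b = F.μ.app a ≫ t.f.f := t.f.h
  have key : ∀ x : (F : A ⥤ A).obj a ⟶ (F : A ⥤ A).obj b,
      (F : A ⥤ A).map x ≫ F.μ.app b = F.μ.app a ≫ x →
        x = (F : A ⥤ A).map (F.η.app a ≫ x) ≫ F.μ.app b := by
    intro x h
    rw [Functor.map_comp, Category.assoc, h, ← Category.assoc, F.right_unit, Category.id_comp]
  exact key t.f.f h

/-- The transposed map `η_a ≫ t.f.f` of a morphism `Kg a ⟶ Kg b` equalises the pair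
`(g_{F b}, λ_b ∘ F g_b)`. -/
lemma Phi_equalizes {a b : A} (t : (E.Kg gl).obj a ⟶ (E.Kg gl).obj b) :
    (F.η.app a ≫ t.f.f) ≫ gl.g.app ((F : A ⥤ A).obj b) =
      (F.η.app a ≫ t.f.f) ≫ ((F : A ⥤ A).map (gl.g.app b) ≫ E.lam.app b) := by
  have h1 := E.coalg_h_f gl t
  have h2 : F.η.app a ≫ gl.g.app ((F : A ⥤ A).obj a) =
      F.η.app a ≫ ((F : A ⥤ A).map (gl.g.app a) ≫ E.lam.app a) := by
    simpa using eta_equalizes_app E gl a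
  have h3 : t.f.f ≫ gl.g.app ((F : A ⥤ A).obj b) =
      gl.g.app ((F : A ⥤ A).obj a) ≫ (G : A ⥤ A).map t.f.f := by
    exact gl.g.naturality t.f.f
  have key : ∀ x : (F : A ⥤ A).obj a ⟶ (F : A ⥤ A).obj b,
      ((F : A ⥤ A).map (gl.g.app a) ≫ E.lam.app a) ≫ (G : A ⥤ A).map x =
        x ≫ ((F : A ⥤ A).map (gl.g.app b) ≫ E.lam.app b) →
      x ≫ gl.g.app ((F : A ⥤ A).obj b) = gl.g.app ((F : A ⥤ A).obj a) ≫ (G : A ⥤ A).map x →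
      (F.η.app a ≫ x) ≫ gl.g.app ((F : A ⥤ A).obj b) =
        (F.η.app a ≫ x) ≫ ((F : A ⥤ A).map (gl.g.app b) ≫ E.lam.app b) := by
    intro x h1 h3
    calc (F.η.app a ≫ x) ≫ gl.g.app ((F : A ⥤ A).obj b)
        = F.η.app a ≫ gl.g.app ((F : A ⥤ A).obj a) ≫ (G : A ⥤ A).map x := by
          rw [Category.assoc, h3]
      _ = (F.η.app a ≫ ((F : A ⥤ A).map (gl.g.app a) ≫ E.lam.app a)) ≫
            (G : A ⥤ A).map x := by
          rw [← Category.assoc, h2]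
      _ = F.η.app a ≫ x ≫ ((F : A ⥤ A).map (gl.g.app b) ≫ E.lam.app b) := by
          rw [Category.assoc, h1]
      _ = (F.η.app a ≫ x) ≫ ((F : A ⥤ A).map (gl.g.app b) ≫ E.lam.app b) := by
          rw [Category.assoc]
  exact key t.f.f h1 h3

/-- Construction of a morphism `Kg a ⟶ Kg b` from a morphism `a ⟶ F b` which equalises the
pair `(g_{F b}, λ_b ∘ F g_b)`. -/
@[simps]
def homOfEq {a b : A} (f : a ⟶ (F : A ⥤ A).obj b)
    (hf : f ≫ gl.g.app ((F : A ⥤ A).obj b) =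
      f ≫ ((F : A ⥤ A).map (gl.g.app b) ≫ E.lam.app b)) :
    (E.Kg gl).obj a ⟶ (E.Kg gl).obj b where
  f :=
    { f := (F : A ⥤ A).map f ≫ F.μ.app b
      h := by
        show (F : A ⥤ A).map ((F : A ⥤ A).map f ≫ F.μ.app b) ≫ F.μ.app b =
          F.μ.app a ≫ (F : A ⥤ A).map f ≫ F.μ.app b
        have hnat : (F : A ⥤ A).map ((F : A ⥤ A).map f) ≫ F.μ.app ((F : A ⥤ A).obj b) =
            F.μ.app a ≫ (F : A ⥤ A).map f := by
          simpa using F.μ.naturality f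
        rw [Functor.map_comp, Category.assoc, F.assoc, ← Category.assoc, hnat,
          Category.assoc] }
  h := by
    ext
    dsimp
    have key : ((F : A ⥤ A).map f ≫ F.μ.app b) ≫
        ((F : A ⥤ A).map (gl.g.app b) ≫ E.lam.app b) =
        ((F : A ⥤ A).map (gl.g.app a) ≫ E.lam.app a) ≫
          (G : A ⥤ A).map ((F : A ⥤ A).map f ≫ F.μ.app b) := by
      have hb : F.μ.app b ≫ ((F : A ⥤ A).map (gl.g.app b) ≫ E.lam.app b) =
          (F : A ⥤ A).map ((F : A ⥤ A).map (gl.g.app b) ≫ E.lam.app b) ≫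
            E.lam.app ((F : A ⥤ A).obj b) ≫ (G : A ⥤ A).map (F.μ.app b) :=
        (E.tildegAlg gl b).h.symm
      have hnat : (F : A ⥤ A).map f ≫ (E.tildeg gl).app ((F : A ⥤ A).obj b) =
          (E.tildeg gl).app a ≫ (G : A ⥤ A).map ((F : A ⥤ A).map f) :=
        (E.tildeg gl).naturality f
      simp only [tildeg_app] at hnat
      calc ((F : A ⥤ A).map f ≫ F.μ.app b) ≫
            ((F : A ⥤ A).map (gl.g.app b) ≫ E.lam.app b)
          = (F : A ⥤ A).map f ≫
              (F : A ⥤ A).map ((F : A ⥤ A).map (gl.g.app b) ≫ E.lam.app b) ≫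
              E.lam.app ((F : A ⥤ A).obj b) ≫ (G : A ⥤ A).map (F.μ.app b) := by
            rw [Category.assoc, hb]
        _ = (F : A ⥤ A).map (f ≫ ((F : A ⥤ A).map (gl.g.app b) ≫ E.lam.app b)) ≫
              E.lam.app ((F : A ⥤ A).obj b) ≫ (G : A ⥤ A).map (F.μ.app b) := by
            simp only [Functor.map_comp, Category.assoc]
        _ = (F : A ⥤ A).map (f ≫ gl.g.app ((F : A ⥤ A).obj b)) ≫
              E.lam.app ((F : A ⥤ A).obj b) ≫ (G : A ⥤ A).map (F.μ.app b) := by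
            rw [← hf]
        _ = (F : A ⥤ A).map f ≫
              ((F : A ⥤ A).map (gl.g.app ((F : A ⥤ A).obj b)) ≫
                E.lam.app ((F : A ⥤ A).obj b)) ≫ (G : A ⥤ A).map (F.μ.app b) := by
            simp only [Functor.map_comp, Category.assoc]
        _ = (((F : A ⥤ A).map (gl.g.app a) ≫ E.lam.app a) ≫
              (G : A ⥤ A).map ((F : A ⥤ A).map f)) ≫ (G : A ⥤ A).map (F.μ.app b) := by
            rw [← Category.assoc, hnat]
        _ = ((F : A ⥤ A).map (gl.g.app a) ≫ E.lam.app a) ≫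
              (G : A ⥤ A).map ((F : A ⥤ A).map f ≫ F.μ.app b) := by
            rw [Functor.map_comp, Category.assoc]
    exact key.symm

lemma homOfEq_eta {a b : A} (f : a ⟶ (F : A ⥤ A).obj b)
    (hf : f ≫ gl.g.app ((F : A ⥤ A).obj b) =
      f ≫ ((F : A ⥤ A).map (gl.g.app b) ≫ E.lam.app b)) :
    F.η.app a ≫ (E.homOfEq gl f hf).f.f = f := by
  have hnat : F.η.app a ≫ (F : A ⥤ A).map f = f ≫ F.η.app ((F : A ⥤ A).obj b) := by
    simpa using (F.η.naturality f).symm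
  simp only [homOfEq_f_f]
  have key : F.η.app a ≫ (F : A ⥤ A).map f ≫ F.μ.app b = f := by
    rw [← Category.assoc, hnat, Category.assoc, F.left_unit]
    simp
  exact key

lemma hom_ext_eta {a b : A} {t s : (E.Kg gl).obj a ⟶ (E.Kg gl).obj b}
    (h : F.η.app a ≫ t.f.f = F.η.app a ≫ s.f.f) : t = s := by
  ext
  rw [E.alg_f_eq gl t, E.alg_f_eq gl s, h]

lemma Kg_map_eta {a b : A} (h : a ⟶ b) :
    F.η.app a ≫ ((E.Kg gl).map h).f.f = h ≫ F.η.app b := by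
  have := F.η.naturality h
  exact this.symm

variable [HasEqualizers A]

lemma iF_app_w (a : A) :
    (E.iF gl).app a ≫ gl.g.app ((F : A ⥤ A).obj a) =
      (E.iF gl).app a ≫ ((F : A ⥤ A).map (gl.g.app a) ≫ E.lam.app a) := by
  have := NatTrans.congr_app (equalizer.condition (gF (F := F) gl) (E.tildeg gl)) a
  exact this

/-- The pointwise fork given by the equaliser inclusion `i_F` is a limit fork. -/
noncomputable def forkIotaIsLimit (a : A) :
    IsLimit (Fork.ofι
      (f := gl.g.app ((F : A ⥤ A).obj a))
      (g := (F : A ⥤ A).map (gl.g.app a) ≫ E.lam.app a)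
      ((E.iF gl).app a) (E.iF_app_w gl a)) :=
  isLimitForkMapOfIsLimit ((evaluation A A).obj a)
    (equalizer.condition (gF (F := F) gl) (E.tildeg gl))
    (equalizerIsEqualizer (gF (F := F) gl) (E.tildeg gl))

lemma unitFg_iF : E.unitFg gl ≫ E.iF gl = F.η :=
  equalizer.lift_ι _ _

lemma unitFg_app_iF_app (a : A) :
    (E.unitFg gl).app a ≫ (E.iF gl).app a = F.η.app a := by
  have := NatTrans.congr_app (E.unitFg_iF gl) a
  simpa using this

/-- `K_g` is full and faithful iff each unit fork is an equaliser. -/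
lemma ff_iff_forks :
    (((E.Kg gl).Full ∧ (E.Kg gl).Faithful) ↔
      ∀ a : A, Nonempty (IsLimit (Fork.ofι
        (f := gl.g.app ((F : A ⥤ A).obj a))
        (g := (F : A ⥤ A).map (gl.g.app a) ≫ E.lam.app a)
        (F.η.app a) (by simpa using Entwining.eta_equalizes_app E gl a)))) := by
  constructor
  · rintro ⟨hfull, hfaith⟩ a
    refine ⟨Fork.IsLimit.mk' _ (fun s => ?_)⟩
    have hcond : s.ι ≫ gl.g.app ((F : A ⥤ A).obj a) =
        s.ι ≫ ((F : A ⥤ A).map (gl.g.app a) ≫ E.lam.app a) := s.condition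
    have hsurj := hfull.map_surjective (E.homOfEq gl s.ι hcond)
    set h := hsurj.choose with hhdef
    have hh : (E.Kg gl).map h = E.homOfEq gl s.ι hcond := hsurj.choose_spec
    have e1 : F.η.app s.pt ≫ ((E.Kg gl).map h).f.f = s.ι := by
      rw [hh]; exact E.homOfEq_eta gl s.ι hcond
    have e2 : h ≫ F.η.app a = s.ι := by
      rw [← E.Kg_map_eta gl h]; exact e1
    refine ⟨h, by simpa using e2, ?_⟩
    · intro m hm
      have hm' : m ≫ F.η.app a = s.ι := by simpa using hm
      apply hfaith.map_injective
      apply E.hom_ext_eta gl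
      rw [E.Kg_map_eta gl m, E.Kg_map_eta gl h]
      exact hm'.trans e2.symm
  · intro hl
    constructor
    · refine ⟨fun {a b} t => ?_⟩
      have hf := E.Phi_equalizes gl t
      obtain ⟨h, hh⟩ := Fork.IsLimit.lift' (hl b).some (F.η.app a ≫ t.f.f) hf
      simp only [Fork.ι_ofι] at hh
      refine ⟨h, ?_⟩
      apply E.hom_ext_eta gl
      exact (E.Kg_map_eta gl h).trans hh
    · refine ⟨fun {a b} h₁ h₂ hEq => ?_⟩
      have e : h₁ ≫ F.η.app b = h₂ ≫ F.η.app b := by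
        rw [← E.Kg_map_eta gl h₁, ← E.Kg_map_eta gl h₂, hEq]
      exact Fork.IsLimit.hom_ext (hl b).some (by simpa using e)

/-- The canonical map to `F^g` is an isomorphism iff each unit fork is an equaliser. -/
lemma iso_iff_forks :
    (IsIso (E.unitFg gl) ↔
      ∀ a : A, Nonempty (IsLimit (Fork.ofι
        (f := gl.g.app ((F : A ⥤ A).obj a))
        (g := (F : A ⥤ A).map (gl.g.app a) ≫ E.lam.app a)
        (F.η.app a) (by simpa using Entwining.eta_equalizes_app E gl a)))) := by
  constructor
  · intro hiso a
    refine ⟨IsLimit.ofIsoLimit (E.forkIotaIsLimit gl a)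
      (Fork.ext (asIso ((E.unitFg gl).app a)).symm ?_)⟩
    simp only [Fork.ι_ofι, Iso.symm_hom, asIso_inv]
    rw [IsIso.inv_comp_eq, E.unitFg_app_iF_app gl a]
  · intro hl
    have hptwise : ∀ a : A, IsIso ((E.unitFg gl).app a) := by
      intro a
      have hs := (hl a).some
      have ht := E.forkIotaIsLimit gl a
      have heq : (E.unitFg gl).app a = (IsLimit.conePointUniqueUpToIso hs ht).hom := by
        apply Fork.IsLimit.hom_ext ht
        have hcomp := IsLimit.conePointUniqueUpToIso_hom_comp hs ht WalkingParallelPair.zero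
        simp only [Fork.ι_ofι]
        rw [E.unitFg_app_iF_app gl a]
        exact hcomp.symm
      rw [heq]
      infer_instance
    exact NatIso.isIso_of_isIso_app _

end Entwining


/-- **Proposition 3.5.**  Let `A` admit equalisers, `λ : FG ⟶ GF` an entwining from a
monad `F` to a comonad `G`, `g : Id ⟶ G` a grouplike morphism, `Ĝ` the lifting of `G` to
`A_F`, and `K_g : A ⥤ (A_F)^{Ĝ}` the induced comparison functor `a ↦ ((F(a), m_a), g̃_a)`.
Then `K_g` is full and faithful if and only if the monad `F^g` is (isomorphic to) the
identity monad, i.e. iff the canonical monad morphism `e' : Id ⟶ F^g` is an isomorphism;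
equivalently, for every `a` the diagram `a ⟶ F(a) ⇉ GF(a)` (with parallel pair
`g_{F(a)}` and `λ_a ∘ F(g_a)` and equalising morphism `e_a`) is an equaliser diagram. -/
theorem statement15 {A : Type*} [Category A] [HasEqualizers A]
    (F : Monad A) (G : Comonad A) (E : Entwining F G) (gl : Grouplike G) :
    (((E.Kg gl).Full ∧ (E.Kg gl).Faithful) ↔ IsIso (E.unitFg gl)) ∧
    (((E.Kg gl).Full ∧ (E.Kg gl).Faithful) ↔
      ∀ a : A, Nonempty (IsLimit (Fork.ofι
        (f := gl.g.app ((F : A ⥤ A).obj a))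
        (g := (F : A ⥤ A).map (gl.g.app a) ≫ E.lam.app a)
        (F.η.app a) (by simpa using Entwining.eta_equalizes_app E gl a)))) := by
  exact ⟨(E.ff_iff_forks gl).trans (E.iso_iff_forks gl).symm, E.ff_iff_forks gl⟩

end Paper
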